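/- Let θ be an irrational real number and let φ be a real number. Then the additive subgroups ℤ + θℤ and ℤ + φℤ of ℝ are equal if and only if φ − θ ∈ ℤ or φ + θ ∈ ℤ. -/

import Mathlib

/-- For an irrational number `θ` and a real number `φ`, the subgroups `ℤ + θℤ` and
`ℤ + φℤ` of `ℝ` coincide if and only if `φ - θ ∈ ℤ` or `φ + θ ∈ ℤ`. -/
theorem subgroup_int_add_zsmul_eq_iff
    (θ : ℝ) (hθ : Irrational θ) (φ : ℝ) :
    AddSubgroup.closure ({1, θ} : Set ℝ) = AddSubgroup.closure ({1, φ} : Set ℝ) ↔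
      ((∃ n : ℤ, φ - θ = n) ∨ (∃ n : ℤ, φ + θ = n)) := by
  constructor
  · intro h
    have hφmem : φ ∈ AddSubgroup.closure ({1, θ} : Set ℝ) := by
      rw [h]; exact AddSubgroup.subset_closure (by simp)
    have hθmem : θ ∈ AddSubgroup.closure ({1, φ} : Set ℝ) := by
      rw [← h]; exact AddSubgroup.subset_closure (by simp)
    rw [AddSubgroup.mem_closure_pair] at hφmem hθmem
    obtain ⟨m, n, hmn⟩ := hφmem
    obtain ⟨c, d, hcd⟩ := hθmem
    simp only [zsmul_eq_mul, mul_one] at hmn hcd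
    have key : (((1 : ℤ) - d * n : ℤ) : ℝ) * θ = ((c + d * m : ℤ) : ℝ) := by
      push_cast
      linear_combination - hcd - (d : ℝ) * hmn
    have hdn : (1 : ℤ) - d * n = 0 := by
      by_contra hne
      have : Irrational (((1 - d * n : ℤ) : ℝ) * θ) :=
        hθ.intCast_mul hne
      rw [key] at this
      exact this.ne_int _ rfl
    have hdn1 : d * n = 1 := by omega
    have hdn1' : n * d = 1 := by rw [mul_comm]; exact hdn1
    have : n = 1 ∨ n = -1 := Int.eq_one_or_neg_one_of_mul_eq_one hdn1' 
    rcases this with rfl | rfl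
    · left
      refine ⟨m, ?_⟩
      rw [← hmn]; ring
    · right
      refine ⟨m, ?_⟩
      rw [← hmn]; ring
  · intro h
    have gen : ∀ a b : ℝ, a ∈ AddSubgroup.closure ({1, b} : Set ℝ) →
        AddSubgroup.closure ({1, a} : Set ℝ) ≤ AddSubgroup.closure ({1, b} : Set ℝ) := by
      intro a b ha
      refine AddSubgroup.closure_le _ |>.mpr ?_
      rintro x (rfl | rfl)
      · exact AddSubgroup.subset_closure (by simp)
      · exact ha
    rcases h with ⟨n, hn⟩ | ⟨n, hn⟩
    · have hφ : φ = θ + n := by linarith [hn]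
      refine le_antisymm (gen _ _ ?_) (gen _ _ ?_)
      · rw [AddSubgroup.mem_closure_pair]
        exact ⟨-n, 1, by simp only [zsmul_eq_mul, mul_one]; rw [hφ]; push_cast; ring⟩
      · rw [AddSubgroup.mem_closure_pair]
        exact ⟨n, 1, by simp only [zsmul_eq_mul, mul_one]; rw [hφ]; push_cast; ring⟩
    · have hφ : φ = -θ + n := by linarith [hn]
      refine le_antisymm (gen _ _ ?_) (gen _ _ ?_)
      · rw [AddSubgroup.mem_closure_pair]
        exact ⟨n, -1, by simp only [zsmul_eq_mul, mul_one]; rw [hφ]; push_cast; ring⟩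
      · rw [AddSubgroup.mem_closure_pair]
        exact ⟨n, -1, by simp only [zsmul_eq_mul, mul_one]; rw [hφ]; push_cast; ring⟩
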